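/- For every integer N ≥ 2 there exist an integer e ≥ 1 and an O-sequence (h_0 = 1, h_1, ..., h_{e+1}) of nonnegative integers such that the sequence (f_{-1} = 1, f_0, f_1, ..., f_e) defined by f_{k-1} = Σ_{i=0}^{k} C(e+1-i, k-i)·h_i for k = 0, 1, ..., e+1 is nonunimodal with exactly N peaks. -/

import Mathlib

/-- `macaulayBound i n` is the Macaulay upper bound `n^{<i>}`, computed greedily from
the `i`-binomial expansion of `n`:  if `n = C(n_i,i) + C(n_{i-1},i-1) + ⋯ + C(n_j,j)`
with `n_i > n_{i-1} > ⋯ > n_j ≥ j ≥ 1`, then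
`n^{<i>} = C(n_i+1,i+1) + C(n_{i-1}+1,i) + ⋯ + C(n_j+1,j+1)`.
By convention `macaulayBound 0 n = 0` and `macaulayBound i 0 = 0`. -/
def macaulayBound : ℕ → ℕ → ℕ
  | 0, _ => 0
  | _ + 1, 0 => 0
  | i + 1, n + 1 =>
      let m := Nat.findGreatest (fun m => Nat.choose m (i + 1) ≤ n + 1) (n + i + 2)
      Nat.choose (m + 1) (i + 2) + macaulayBound i (n + 1 - Nat.choose m (i + 1))

/-- `IsPeak L g i`: position `i` is a peak of the finite sequence `g 0, …, g (L-1)`: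
the entry at `i` is strictly greater than the preceding entry (or `i` is the first
position) and strictly greater than the following entry (or `i` is the last position). -/
def IsPeak (L : ℕ) (g : ℕ → ℕ) (i : ℕ) : Prop :=
  i < L ∧ (i = 0 ∨ g (i - 1) < g i) ∧ (i + 1 = L ∨ g (i + 1) < g i)

/-- `IsPureFVector e f`: `(1, f 0, …, f e)` is a pure f-vector, i.e. there are a finite
set `V` and a nonempty family `F` of `(e+1)`-element subsets of `V` such that, for each
`i ≤ e`, `f i` is the number of `(i+1)`-element subsets of `V` contained in at least one
member of `F`. -/
def IsPureFVector (e : ℕ) (f : ℕ → ℕ) : Prop :=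
  ∃ (V : Finset ℕ) (F : Finset (Finset ℕ)), F.Nonempty ∧
    (∀ S ∈ F, S ⊆ V ∧ S.card = e + 1) ∧
    ∀ i ≤ e, f i = ((V.powersetCard (i + 1)).filter (fun T => ∃ S ∈ F, T ⊆ S)).card

/-- The sequence `(1, f 0, f 1, …)` attached to an f-vector `f`. -/
def seqOf (f : ℕ → ℕ) : ℕ → ℕ := fun k => if k = 0 then 1 else f (k - 1)


lemma chooseB1 {n r : ℕ} (h : 2*(r+1) ≤ n) : Nat.choose n r < Nat.choose n (r+1) := by
  have hr : r ≤ n := by omega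
  have hpos : 0 < Nat.choose n r := Nat.choose_pos hr
  have he := Nat.choose_succ_right_eq n r
  have : Nat.choose n r * (r+1) < Nat.choose n (r+1) * (r+1) := by
    rw [he]
    have : r + 2 ≤ n - r := by omega
    calc Nat.choose n r * (r+1) < Nat.choose n r * (r+2) :=
          (Nat.mul_lt_mul_left hpos).2 (by omega)
      _ ≤ Nat.choose n r * (n - r) := Nat.mul_le_mul_left _ (by omega)
  exact Nat.lt_of_mul_lt_mul_right this

lemma chooseB2 {n r : ℕ} (h1 : n ≤ 2*r) (h2 : r ≤ n) : Nat.choose n (r+1) < Nat.choose n r := by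
  have hpos : 0 < Nat.choose n r := Nat.choose_pos h2
  have he := Nat.choose_succ_right_eq n r
  have : Nat.choose n (r+1) * (r+1) < Nat.choose n r * (r+1) := by
    rw [he]
    have h3 : n - r ≤ r := by omega
    calc Nat.choose n r * (n - r) ≤ Nat.choose n r * r := Nat.mul_le_mul_left _ h3
      _ < Nat.choose n r * (r+1) := (Nat.mul_lt_mul_left hpos).2 (by omega)
  exact Nat.lt_of_mul_lt_mul_right this

lemma chooseB2a {n r : ℕ} (h1 : n ≤ 2*r+1) : Nat.choose n (r+1) ≤ Nat.choose n r := by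
  rcases le_or_gt r n with h2 | h2
  · have he := Nat.choose_succ_right_eq n r
    have : Nat.choose n (r+1) * (r+1) ≤ Nat.choose n r * (r+1) := by
      rw [he]; exact Nat.mul_le_mul_left _ (by omega)
    exact Nat.le_of_mul_le_mul_right this (by omega)
  · rw [Nat.choose_eq_zero_of_lt (by omega)]; exact Nat.zero_le _

lemma chooseB3 {n a b : ℕ} (hab : a ≤ b) (h : 2*b ≤ n) : Nat.choose n a ≤ Nat.choose n b := by
  induction b, hab using Nat.le_induction with
  | base => exact le_refl _
  | succ b hb ih =>
    exact le_trans (ih (by omega)) (le_of_lt (chooseB1 (by omega)))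

lemma chooseB4 (n k : ℕ) : Nat.choose n k ≤ 2^n := by
  rcases le_or_gt k n with h | h
  · calc Nat.choose n k ≤ ∑ m ∈ Finset.range (n+1), Nat.choose n m :=
        Finset.single_le_sum (fun i _ => Nat.zero_le _) (Finset.mem_range.2 (by omega))
      _ = 2^n := Nat.sum_range_choose n
  · rw [Nat.choose_eq_zero_of_lt h]; exact Nat.zero_le _

lemma chooseB5 (a : ℕ) {b : ℕ} (hb : 1 ≤ b) : a + 1 ≤ Nat.choose (a+b) b := by
  induction b, hb using Nat.le_induction with
  | base => simp [Nat.choose_one_right]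
  | succ b hb ih =>
    have : a + (b+1) = (a+b) + 1 := by omega
    rw [this, Nat.choose_succ_succ]
    omega

lemma CMhockey {d : ℕ} : ∀ (j s : ℕ), s + j ≤ d →
    ∑ r ∈ Finset.range (j+1), Nat.choose (d - s - r) (j - r) = Nat.choose (d - s + 1) j := by
  intro j
  induction j with
  | zero => intro s _; simp
  | succ j ih =>
    intro s hs
    rw [Finset.sum_range_succ']
    have h1 : ∀ r ∈ Finset.range (j+1), Nat.choose (d - s - (r+1)) (j + 1 - (r+1))
        = Nat.choose (d - (s+1) - r) (j - r) := by
      intro r _; congr 1 <;> omega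
    rw [Finset.sum_congr rfl h1, ih (s+1) (by omega)]
    have h2 : d - s - 0 = (d - (s+1)) + 1 := by omega
    have h3 : d - s + 1 = ((d - (s+1)) + 1) + 1 := by omega
    rw [h2, h3]
    simp only [Nat.sub_zero]
    rw [Nat.choose_succ_succ ((d - (s+1)) + 1) j]

def CMd (N : ℕ) : ℕ := 2^(3*N+2)
def CMm (t : ℕ) : ℕ := 2^(3*t+2)
def CMs (N t : ℕ) : ℕ := CMd N + 1 - CMm t
def CMS (N : ℕ) : ℕ := 2^(3*(CMd N+1)*(CMd N+1))
def CMlamAux (N : ℕ) : ℕ → ℕ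
  | 0 => CMS N
  | j+1 => 4 * Nat.choose (CMm (N-j)) (CMm (N-j-1)) * CMlamAux N j
def CMlam (N t : ℕ) : ℕ := CMlamAux N (N-t)
def CMB (N t k : ℕ) : ℕ := if CMs N t ≤ k then Nat.choose (CMm t) (k - CMs N t) else 0
def CMh (N : ℕ) : ℕ → ℕ := fun i => 1 + ∑ t ∈ Finset.Icc 1 N, (if CMs N t ≤ i then CMlam N t else 0)
def CMG (N : ℕ) : ℕ → ℕ := fun k => Nat.choose (CMd N+1) k + ∑ t ∈ Finset.Icc 1 N, CMlam N t * CMB N t k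
def CMpk (N t : ℕ) : ℕ := CMd N + 1 - 2^(3*t+1)

lemma CMm_mono' {a b : ℕ} (h : a ≤ b) : CMm a ≤ CMm b :=
  Nat.pow_le_pow_right (by norm_num) (by omega)

lemma CMm_mono {a b : ℕ} (h : a < b) : 2 * CMm a ≤ CMm b := by
  have : 2 * 2^(3*a+2) = 2^(3*a+3) := by ring
  unfold CMm; rw [this]
  exact Nat.pow_le_pow_right (by norm_num) (by omega)

lemma CMm_le_d {N t : ℕ} (h : t ≤ N) : CMm t ≤ CMd N :=
  Nat.pow_le_pow_right (by norm_num) (by omega)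

lemma CMm_ge : ∀ t, 4 ≤ CMm t := fun t =>
  le_trans (by norm_num) (Nat.pow_le_pow_right (by norm_num) (by omega : 2 ≤ 3*t+2))

lemma CMlam_top (N : ℕ) : CMlam N N = CMS N := by
  unfold CMlam; rw [Nat.sub_self]; rfl

lemma CMlam_rec {N t : ℕ} (h1 : t < N) :
    CMlam N t = 4 * Nat.choose (CMm (t+1)) (CMm t) * CMlam N (t+1) := by
  unfold CMlam
  have h2 : N - t = (N - (t+1)) + 1 := by omega
  rw [h2]
  show 4 * Nat.choose (CMm (N-(N-(t+1)))) (CMm (N-(N-(t+1))-1)) * CMlamAux N (N-(t+1)) = _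
  have e1 : N-(N-(t+1)) = t+1 := by omega
  rw [e1]
  norm_num

lemma CMS_le_lam (N : ℕ) : ∀ t, CMS N ≤ CMlam N t := by
  have key : ∀ j, CMS N ≤ CMlamAux N j := by
    intro j
    induction j with
    | zero => exact le_refl _
    | succ j ih =>
      have hc : 1 ≤ Nat.choose (CMm (N-j)) (CMm (N-j-1)) :=
        Nat.choose_pos (CMm_mono' (by omega))
      calc CMS N ≤ CMlamAux N j := ih
        _ ≤ 4 * Nat.choose (CMm (N-j)) (CMm (N-j-1)) * CMlamAux N j := by
            have : 1 ≤ 4 * Nat.choose (CMm (N-j)) (CMm (N-j-1)) := by omega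
            calc CMlamAux N j = 1 * CMlamAux N j := (one_mul _).symm
              _ ≤ 4 * Nat.choose (CMm (N-j)) (CMm (N-j-1)) * CMlamAux N j :=
                Nat.mul_le_mul_right _ this
        _ = CMlamAux N (j+1) := rfl
  intro t; exact key (N-t)

lemma CMlam_pos (N t : ℕ) : 1 ≤ CMlam N t :=
  le_trans (Nat.one_le_two_pow) (CMS_le_lam N t)

lemma CMlam_step_ge {N t : ℕ} (h1 : t < N) : 4 * CMlam N (t+1) ≤ CMlam N t := by
  rw [CMlam_rec h1]
  have hc : 1 ≤ Nat.choose (CMm (t+1)) (CMm t) :=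
    Nat.choose_pos (le_trans (by omega : CMm t ≤ 2 * CMm t) (CMm_mono (by omega)))
  calc 4 * CMlam N (t+1) ≤ 4 * Nat.choose (CMm (t+1)) (CMm t) * CMlam N (t+1) := by
        have := Nat.mul_le_mul_right (CMlam N (t+1)) (by omega : 4 ≤ 4 * Nat.choose (CMm (t+1)) (CMm t))
        exact this
    _ = _ := rfl

/-- P4: geometric domination. -/
lemma CMlam_sum_le {N : ℕ} : ∀ j t, 1 ≤ t → t + j = N →
    2 * (∑ l ∈ Finset.Icc (t+1) N, CMlam N l * Nat.choose (CMm l) (CMm t)) ≤ CMlam N t := by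
  intro j
  induction j with
  | zero =>
    intro t _ ht
    have : t = N := by omega
    subst this
    rw [Finset.Icc_eq_empty (by omega)]
    simp [CMlam_pos]
  | succ j ih =>
    intro t ht1 ht2
    have htN : t < N := by omega
    have hsplit : Finset.Icc (t+1) N = insert (t+1) (Finset.Icc (t+2) N) := by
      ext x
      simp only [Finset.mem_Icc, Finset.mem_insert]
      omega
    rw [hsplit, Finset.sum_insert (by simp)]
    have htail : ∑ l ∈ Finset.Icc (t+2) N, CMlam N l * Nat.choose (CMm l) (CMm t)
        ≤ ∑ l ∈ Finset.Icc (t+2) N, CMlam N l * Nat.choose (CMm l) (CMm (t+1)) := by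
      apply Finset.sum_le_sum
      intro l hl
      simp only [Finset.mem_Icc] at hl
      apply Nat.mul_le_mul_left
      apply chooseB3
      · have := CMm_mono (by omega : t < t+1); omega
      · exact CMm_mono (by omega : t+1 < l)
    rcases Nat.lt_or_ge (t+1) N with hcase | hcase
    · have ih2 := ih (t+1) (by omega) (by omega)
      have hrec := CMlam_rec htN
      set C := Nat.choose (CMm (t+1)) (CMm t) with hC
      have hc1 : 1 ≤ C :=
        Nat.choose_pos (le_trans (by omega : CMm t ≤ 2 * CMm t) (CMm_mono (by omega)))
      -- 2*(lam(t+1)*C + tail) ≤ 2*lam(t+1)*C + lam(t+1) ≤ 4*C*lam(t+1) = lam t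
      have h1 : 2 * (∑ l ∈ Finset.Icc (t+2) N, CMlam N l * Nat.choose (CMm l) (CMm t)) ≤ CMlam N (t+1) :=
        le_trans (Nat.mul_le_mul_left 2 htail) ih2
      rw [hrec]
      nlinarith [CMlam_pos N (t+1)]
    · have : t + 1 = N := by omega
      rw [this, Finset.Icc_eq_empty (by omega)]
      simp only [Finset.sum_empty, add_zero]
      rw [CMlam_rec htN, this]
      nlinarith [CMlam_pos N N, Nat.choose_pos (le_trans (by omega : CMm t ≤ 2 * CMm t) (CMm_mono (by omega : t < N)) : CMm t ≤ CMm N)]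

lemma CMbumpsum {d s m k : ℕ} (hm : s + m = d + 1) (hk : k ≤ d) :
    ∑ i ∈ Finset.range (k+1), (if s ≤ i then Nat.choose (d-i) (k-i) else 0)
      = (if s ≤ k then Nat.choose m (k - s) else 0) := by
  rw [← Finset.sum_filter]
  rcases le_or_gt s k with hsk | hsk
  · rw [if_pos hsk]
    have hfilter : Finset.filter (fun i => s ≤ i) (Finset.range (k+1)) = Finset.Ico s (k+1) := by
      ext x
      simp only [Finset.mem_filter, Finset.mem_range, Finset.mem_Ico]
      omega
    rw [hfilter, Finset.sum_Ico_eq_sum_range]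
    have h1 : k + 1 - s = (k - s) + 1 := by omega
    rw [h1]
    have h2 : ∀ r ∈ Finset.range ((k-s)+1), Nat.choose (d - (s + r)) (k - (s + r))
        = Nat.choose (d - s - r) ((k - s) - r) := by
      intro r hr
      simp only [Finset.mem_range] at hr
      congr 1 <;> omega
    rw [Finset.sum_congr rfl h2, CMhockey (k-s) s (by omega)]
    congr 1
    omega
  · rw [if_neg (by omega)]
    have hfilter : Finset.filter (fun i => s ≤ i) (Finset.range (k+1)) = ∅ := by
      ext x
      simp only [Finset.mem_filter, Finset.mem_range, Finset.notMem_empty, iff_false]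
      omega
    rw [hfilter, Finset.sum_empty]

lemma CMtransform {N k : ℕ} (hk : k ≤ CMd N) :
    ∑ i ∈ Finset.range (k+1), Nat.choose (CMd N - i) (k-i) * CMh N i = CMG N k := by
  unfold CMh CMG
  have expand : ∀ i ∈ Finset.range (k+1),
      Nat.choose (CMd N - i) (k-i) * (1 + ∑ t ∈ Finset.Icc 1 N, (if CMs N t ≤ i then CMlam N t else 0))
      = Nat.choose (CMd N - i) (k-i)
        + ∑ t ∈ Finset.Icc 1 N, CMlam N t * (if CMs N t ≤ i then Nat.choose (CMd N - i) (k-i) else 0) := by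
    intro i _
    rw [Nat.mul_add, Nat.mul_one, Finset.mul_sum]
    congr 1
    apply Finset.sum_congr rfl
    intro t _
    by_cases h : CMs N t ≤ i
    · rw [if_pos h, if_pos h, Nat.mul_comm]
    · rw [if_neg h, if_neg h, Nat.mul_zero, Nat.mul_zero]
  rw [Finset.sum_congr rfl expand, Finset.sum_add_distrib]
  congr 1
  · have h0 := CMhockey (d := CMd N) k 0 (by omega)
    simpa using h0
  · rw [Finset.sum_comm]
    apply Finset.sum_congr rfl
    intro t ht
    simp only [Finset.mem_Icc] at ht
    rw [← Finset.mul_sum]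
    congr 1
    unfold CMB
    have hsm : CMs N t + CMm t = CMd N + 1 := by
      unfold CMs
      have := CMm_le_d (N := N) (t := t) (by omega)
      omega
    exact CMbumpsum hsm hk

lemma CMmB_ge : ∀ i, 1 ≤ i → ∀ n, n ≤ macaulayBound i n := by
  intro i
  induction i with
  | zero => omega
  | succ i ih =>
    intro _ n
    match n with
    | 0 => exact Nat.zero_le _
    | n+1 =>
      rcases Nat.eq_zero_or_pos i with hi0 | hipos
      · subst hi0
        simp only [macaulayBound]
        set m := Nat.findGreatest (fun m => Nat.choose m 1 ≤ n + 1) (n + 0 + 2) with hm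
        have hwit : n + 1 ≤ m :=
          Nat.le_findGreatest (by omega) (by simp [Nat.choose_one_right])
        have h2 : n + 1 ≤ Nat.choose (m+1) 2 := by
          calc n + 1 ≤ Nat.choose (n+2) 2 := chooseB5 n (by omega)
            _ ≤ Nat.choose (m+1) 2 := Nat.choose_le_choose 2 (by omega)
        have h3 : Nat.choose (m+1) (0+2) = Nat.choose (m+1) 2 := by norm_num
        omega
      · simp only [macaulayBound]
        set m := Nat.findGreatest (fun m => Nat.choose m (i+1) ≤ n + 1) (n + i + 2) with hm
        have hPm : Nat.choose m (i+1) ≤ n + 1 :=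
          Nat.findGreatest_spec (P := fun m => Nat.choose m (i+1) ≤ n + 1)
            (m := i+1) (by omega) (by simp [Nat.choose_self])
        have hmw : i + 1 ≤ m :=
          Nat.le_findGreatest (by omega) (by simp [Nat.choose_self])
        have hpascal : Nat.choose (m+1) (i+2) = Nat.choose m (i+1) + Nat.choose m (i+2) :=
          Nat.choose_succ_succ m (i+1)
        have hih := ih hipos (n + 1 - Nat.choose m (i+1))
        omega

lemma CMmB_jump {i v w : ℕ} (hi : 1 ≤ i) (hv : 1 ≤ v)
    (h1 : ∀ A : ℕ, Nat.choose A i ≤ v → v < Nat.choose (A+1) i → (i+1) * (v + w) ≤ (v+1) * (A + 1 - i)) :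
    v + w ≤ macaulayBound i v := by
  obtain ⟨i', rfl⟩ : ∃ i', i = i' + 1 := ⟨i - 1, by omega⟩
  obtain ⟨v', rfl⟩ : ∃ v', v = v' + 1 := ⟨v - 1, by omega⟩
  simp only [macaulayBound]
  set m := Nat.findGreatest (fun m => Nat.choose m (i'+1) ≤ v' + 1) (v' + i' + 2) with hm
  have hPm : Nat.choose m (i'+1) ≤ v' + 1 :=
    Nat.findGreatest_spec (P := fun m => Nat.choose m (i'+1) ≤ v' + 1)
      (m := i'+1) (by omega) (by simp [Nat.choose_self])
  have hmb : m ≤ v' + i' + 2 := Nat.findGreatest_le _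
  have hmlt : m < v' + i' + 2 := by
    rcases Nat.lt_or_ge m (v' + i' + 2) with h | h
    · exact h
    · exfalso
      have hmeq : m = v' + i' + 2 := by omega
      have : v' + 2 ≤ Nat.choose ((v'+1) + (i'+1)) (i'+1) := chooseB5 (v'+1) (by omega)
      have heq : (v'+1) + (i'+1) = v' + i' + 2 := by omega
      rw [heq] at this
      rw [hmeq] at hPm
      omega
  have hnot : v' + 1 < Nat.choose (m+1) (i'+1) := by
    have := Nat.findGreatest_is_greatest (P := fun m => Nat.choose m (i'+1) ≤ v' + 1)
      (k := m+1) (n := v' + i' + 2) (by omega) (by omega)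
    omega
  have hkey := h1 m hPm hnot
  have hmul : Nat.choose (m+1) (i'+2) * (i'+2) = Nat.choose (m+1) (i'+1) * (m + 1 - (i'+1)) :=
    Nat.choose_succ_right_eq (m+1) (i'+1)
  have hkey2 : (i'+2) * (v' + 1 + w) ≤ (v'+2) * (m + 1 - (i'+1)) := hkey
  have hge : (v' + 1 + w) * (i'+2) ≤ Nat.choose (m+1) (i'+2) * (i'+2) := by
    rw [hmul]
    calc (v' + 1 + w) * (i'+2) = (i'+2) * (v' + 1 + w) := Nat.mul_comm _ _
      _ ≤ (v'+2) * (m + 1 - (i'+1)) := hkey2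
      _ ≤ Nat.choose (m+1) (i'+1) * (m + 1 - (i'+1)) :=
          Nat.mul_le_mul_right (m + 1 - (i'+1)) (by omega)
  have hfin : v' + 1 + w ≤ Nat.choose (m+1) (i'+2) := by
    by_contra hcon
    push_neg at hcon
    have h5 : (Nat.choose (m+1) (i'+2) + 1) * (i'+2) ≤ (v' + 1 + w) * (i'+2) :=
      Nat.mul_le_mul_right _ (by omega)
    nlinarith
  omega

lemma CMm_succ_eq (t : ℕ) : CMm (t+1) = 8 * CMm t := by
  unfold CMm
  have h : 3*(t+1)+2 = (3*t+2)+3 := by omega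
  rw [h, pow_add]
  ring

lemma CMm_two (t : ℕ) : CMm t = 2 * 2^(3*t+1) := by
  unfold CMm
  have h : 3*t+2 = (3*t+1)+1 := by omega
  rw [h, pow_succ]
  ring

lemma CMS_big (N : ℕ) : 2^(CMd N + 3) ≤ CMS N := by
  unfold CMS
  apply Nat.pow_le_pow_right (by norm_num)
  have h1 : 1 ≤ CMd N := Nat.one_le_two_pow
  nlinarith

/-- UP: G is strictly increasing on the rising slope of bump t. -/
lemma CMup {N t k : ℕ} (ht1 : 1 ≤ t) (ht2 : t ≤ N) (hk1 : CMs N t ≤ k)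
    (hk2 : k + 1 ≤ CMpk N t) : CMG N k < CMG N (k+1) := by
  have hmd : CMm t ≤ CMd N := CMm_le_d ht2
  have hm2 : CMm t = 2 * 2^(3*t+1) := CMm_two t
  have hs : CMs N t = CMd N + 1 - CMm t := rfl
  have hpk : CMpk N t = CMd N + 1 - 2^(3*t+1) := rfl
  -- bump t strictly rises
  have hC1 : CMB N t k + 1 ≤ CMB N t (k+1) := by
    unfold CMB
    rw [if_pos hk1, if_pos (by omega)]
    have e1 : k + 1 - CMs N t = (k - CMs N t) + 1 := by omega
    rw [e1]
    have := chooseB1 (n := CMm t) (r := k - CMs N t) (by omega)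
    omega
  -- termwise inequality
  have hC2 : ∀ l ∈ Finset.Icc 1 N,
      CMlam N l * CMB N l k + (if l = t then CMlam N t else 0)
      ≤ CMlam N l * CMB N l (k+1)
        + (if t+1 ≤ l then CMlam N l * Nat.choose (CMm l) (CMm t) else 0) := by
    intro l hl
    simp only [Finset.mem_Icc] at hl
    rcases lt_trichotomy l t with hlt | hEq | hgt
    · -- l < t : both zero
      have h4 : 4 * CMm l ≤ CMm t := by
        have h5 : 3*l+4 ≤ 3*t+2 := by omega
        unfold CMm
        calc 4 * 2^(3*l+2) = 2^(3*l+4) := by rw [pow_add]; ring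
          _ ≤ 2^(3*t+2) := Nat.pow_le_pow_right (by norm_num) h5
      have hml : CMm l ≤ CMd N := CMm_le_d (by omega)
      have hdead : ¬ (CMs N l ≤ k + 1) := by
        unfold CMs
        omega
      unfold CMB
      rw [if_neg hdead, if_neg (by unfold CMs at hdead ⊢; omega)]
      rw [if_neg (by omega)]
      simp
    · -- l = t
      rw [hEq]
      rw [if_pos rfl, if_neg (by omega)]
      have := Nat.mul_le_mul_left (k := CMlam N t) hC1
      calc CMlam N t * CMB N t k + CMlam N t = CMlam N t * (CMB N t k + 1) := by ring
        _ ≤ CMlam N t * CMB N t (k+1) := Nat.mul_le_mul_left _ hC1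
        _ ≤ CMlam N t * CMB N t (k+1) + 0 := by omega
    · -- l > t : value bound
      rw [if_neg (by omega), if_pos (by omega)]
      have hml : CMm l ≤ CMd N := CMm_le_d (by omega)
      have h2m : 2 * CMm t ≤ CMm l := CMm_mono hgt
      have hbound : CMB N l k ≤ Nat.choose (CMm l) (CMm t) := by
        unfold CMB
        split
        · next hsl =>
          have hr : CMd N + 1 - k ≤ CMm t := by unfold CMs at hk1; omega
          have hx : k - CMs N l = CMm l - (CMd N + 1 - k) := by unfold CMs; omega
          rw [hx, Nat.choose_symm (by omega)]
          exact chooseB3 hr (by omega)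
        · exact Nat.zero_le _
      calc CMlam N l * CMB N l k + 0 ≤ CMlam N l * Nat.choose (CMm l) (CMm t) := by
            have := Nat.mul_le_mul_left (k := CMlam N l) hbound
            omega
        _ ≤ _ := by omega
  have hsum := Finset.sum_le_sum hC2
  rw [Finset.sum_add_distrib, Finset.sum_add_distrib] at hsum
  have hsum1 : ∑ l ∈ Finset.Icc 1 N, (if l = t then CMlam N t else 0) = CMlam N t := by
    rw [Finset.sum_ite_eq' (Finset.Icc 1 N) t (fun _ => CMlam N t)]
    rw [if_pos (by simp only [Finset.mem_Icc]; omega)]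
  have hsum2 : ∑ l ∈ Finset.Icc 1 N, (if t+1 ≤ l then CMlam N l * Nat.choose (CMm l) (CMm t) else 0)
      = ∑ l ∈ Finset.Icc (t+1) N, CMlam N l * Nat.choose (CMm l) (CMm t) := by
    rw [← Finset.sum_filter]
    congr 1
    ext x
    simp only [Finset.mem_filter, Finset.mem_Icc]
    omega
  rw [hsum1, hsum2] at hsum
  have hP4 : 2 * (∑ l ∈ Finset.Icc (t+1) N, CMlam N l * Nat.choose (CMm l) (CMm t)) ≤ CMlam N t :=
    CMlam_sum_le (N - t) t ht1 (by omega)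
  have hbase : Nat.choose (CMd N + 1) k ≤ 2^(CMd N + 1) := chooseB4 _ _
  have hlamS : CMS N ≤ CMlam N t := CMS_le_lam N t
  have hSbig : 2^(CMd N + 3) ≤ CMS N := CMS_big N
  have hpow : 2^(CMd N + 3) = 4 * 2^(CMd N + 1) := by rw [pow_add]; ring
  have hone : 1 ≤ 2^(CMd N) := Nat.one_le_two_pow
  show Nat.choose (CMd N+1) k + ∑ l ∈ Finset.Icc 1 N, CMlam N l * CMB N l k
      < Nat.choose (CMd N+1) (k+1) + ∑ l ∈ Finset.Icc 1 N, CMlam N l * CMB N l (k+1)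
  omega


lemma CMmul_succ_le {a b lam : ℕ} (h : a + 1 ≤ b) (hl : 1 ≤ lam) : lam * a + 1 ≤ lam * b := by
  calc lam * a + 1 ≤ lam * a + lam := by omega
    _ = lam * (a + 1) := by ring
    _ ≤ lam * b := Nat.mul_le_mul_left _ h

lemma CMvalley_core {m C C' lam1 : ℕ} (hm : 4 ≤ m) (h1 : 1 ≤ lam1)
    (hmul : C' * (m+1) = C * (7*m)) (hClb : 7*m+1 ≤ C) :
    lam1 * C + (1 + 4*C*lam1) ≤ lam1 * C' := by
  have hC5 : 5*C + 1 ≤ C' := by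
    have h2 : (5*C+1) * (m+1) ≤ C' * (m+1) := by nlinarith
    exact Nat.le_of_mul_le_mul_right h2 (by omega)
  calc lam1 * C + (1 + 4*C*lam1) = lam1 * (5*C) + 1 := by ring
    _ ≤ lam1 * (5*C+1) := by nlinarith
    _ ≤ lam1 * C' := Nat.mul_le_mul_left _ hC5

/-- DOWN: G is strictly decreasing on the falling slope of bump t+1. -/
lemma CMdown {N t k : ℕ} (ht2 : t + 1 ≤ N) (hk1 : CMpk N (t+1) ≤ k)
    (hk2 : k + 1 ≤ CMd N) (hk3 : 1 ≤ t → k + 1 ≤ CMs N t) :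
    CMG N (k+1) < CMG N k := by
  have hmd : CMm (t+1) ≤ CMd N := CMm_le_d ht2
  have hm2 : CMm (t+1) = 2 * 2^(3*(t+1)+1) := CMm_two (t+1)
  have hm8 : CMm (t+1) = 8 * CMm t := CMm_succ_eq t
  have hs1 : CMs N (t+1) = CMd N + 1 - CMm (t+1) := rfl
  have hpk : CMpk N (t+1) = CMd N + 1 - 2^(3*(t+1)+1) := rfl
  have hmt4 : 4 ≤ CMm t := CMm_ge t
  set X : ℕ := if 1 ≤ t ∧ k + 1 = CMs N t then CMlam N t else 0 with hX
  have halive : CMs N (t+1) ≤ k := by omega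
  -- termwise
  have hC2 : ∀ l ∈ Finset.Icc 1 N,
      CMlam N l * CMB N l (k+1) + (if l = t+1 then 1 + X else 0)
      ≤ CMlam N l * CMB N l k + (if l = t then X else 0) := by
    intro l hl
    simp only [Finset.mem_Icc] at hl
    rcases lt_trichotomy l (t+1) with hlt | hEq | hgt
    · rcases Nat.eq_or_lt_of_le (by omega : l ≤ t) with heq2 | hlt2
      · -- l = t (t ≥ 1 since l ≥ 1)
        rw [heq2]
        have hst : k + 1 ≤ CMs N t := hk3 (by omega)
        have hBk : CMB N t k = 0 := by unfold CMB; rw [if_neg (by omega)]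
        rw [hBk, if_neg (by omega), if_pos rfl]
        by_cases hEq : k + 1 = CMs N t
        · have hB1 : CMB N t (k+1) = 1 := by
            unfold CMB
            rw [if_pos (by omega)]
            rw [show k + 1 - CMs N t = 0 by omega]
            exact Nat.choose_zero_right _
          rw [hB1, hX, if_pos ⟨by omega, by omega⟩]
          omega
        · have hB0 : CMB N t (k+1) = 0 := by unfold CMB; rw [if_neg (by omega)]
          rw [hB0, hX, if_neg (by
            rintro ⟨h1, h2⟩
            exact hEq h2)]
      · -- l < t : dead on both
        have h2m : 2 * CMm l ≤ CMm t := CMm_mono hlt2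
        have hml : CMm l ≤ CMd N := CMm_le_d (by omega)
        have hst : k + 1 ≤ CMs N t := hk3 (by omega)
        have hdead : ¬ (CMs N l ≤ k + 1) := by
          unfold CMs at hst ⊢
          have hmtd : CMm t ≤ CMd N := CMm_le_d (by omega)
          omega
        have hB1 : CMB N l (k+1) = 0 := by unfold CMB; rw [if_neg hdead]
        have hB0 : CMB N l k = 0 := by unfold CMB; rw [if_neg (by unfold CMs at hdead ⊢; omega)]
        rw [hB1, hB0, if_neg (by omega), if_neg (by omega)]
    · -- l = t+1 : the falling bump
      rw [hEq]
      rw [if_pos rfl, if_neg (by omega)]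
      have hB1 : CMB N (t+1) (k+1) = Nat.choose (CMm (t+1)) ((k - CMs N (t+1)) + 1) := by
        unfold CMB
        rw [if_pos (by omega), show k + 1 - CMs N (t+1) = (k - CMs N (t+1)) + 1 by omega]
      have hB0 : CMB N (t+1) k = Nat.choose (CMm (t+1)) (k - CMs N (t+1)) := by
        unfold CMB
        rw [if_pos halive]
      rw [hB1, hB0]
      set ρ := k - CMs N (t+1) with hρ
      have hρ1 : 2^(3*(t+1)+1) ≤ ρ := by omega
      have hρ2 : ρ ≤ CMm (t+1) - 1 := by omega
      by_cases hEq : 1 ≤ t ∧ k + 1 = CMs N t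
      · -- valley birth point : k+1 = s_t
        have hmtle : CMm t ≤ CMd N := CMm_le_d (by omega)
        have hst2 : CMs N t = CMd N + 1 - CMm t := rfl
        have hρval : ρ = CMm (t+1) - CMm t - 1 := by omega
        have hsym1 : Nat.choose (CMm (t+1)) ρ = Nat.choose (CMm (t+1)) (CMm t + 1) := by
          rw [show ρ = CMm (t+1) - (CMm t + 1) by omega]
          exact Nat.choose_symm (by omega)
        have hsym2 : Nat.choose (CMm (t+1)) (ρ+1) = Nat.choose (CMm (t+1)) (CMm t) := by
          rw [show ρ + 1 = CMm (t+1) - CMm t by omega]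
          exact Nat.choose_symm (by omega)
        rw [hsym1, hsym2, hX, if_pos hEq]
        have hmul : Nat.choose (CMm (t+1)) (CMm t + 1) * (CMm t + 1)
            = Nat.choose (CMm (t+1)) (CMm t) * (7 * CMm t) := by
          have h0 := Nat.choose_succ_right_eq (CMm (t+1)) (CMm t)
          rw [show CMm (t+1) - CMm t = 7 * CMm t by omega] at h0
          exact h0
        have hClb : 7 * CMm t + 1 ≤ Nat.choose (CMm (t+1)) (CMm t) := by
          have h0 := chooseB5 (7 * CMm t) (show 1 ≤ CMm t by omega)
          rw [show 7 * CMm t + CMm t = CMm (t+1) by omega] at h0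
          exact h0
        have hlamrec : CMlam N t = 4 * Nat.choose (CMm (t+1)) (CMm t) * CMlam N (t+1) :=
          CMlam_rec (by omega : t < N)
        rw [hlamrec]
        have hcore := CMvalley_core (m := CMm t) (C := Nat.choose (CMm (t+1)) (CMm t))
          (C' := Nat.choose (CMm (t+1)) (CMm t + 1)) (lam1 := CMlam N (t+1))
          (by omega) (CMlam_pos N (t+1)) hmul hClb
        calc CMlam N (t+1) * Nat.choose (CMm (t+1)) (CMm t)
              + (1 + 4 * Nat.choose (CMm (t+1)) (CMm t) * CMlam N (t+1))
            ≤ CMlam N (t+1) * Nat.choose (CMm (t+1)) (CMm t + 1) := hcore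
          _ ≤ CMlam N (t+1) * Nat.choose (CMm (t+1)) (CMm t + 1) + 0 := by omega
      · -- ordinary fall : strict decrease suffices
        have hstrict := chooseB2 (n := CMm (t+1)) (r := ρ) (by omega) (by omega)
        rw [hX, if_neg hEq]
        have h0 : CMlam N (t+1) * Nat.choose (CMm (t+1)) (ρ+1) + 1
            ≤ CMlam N (t+1) * Nat.choose (CMm (t+1)) ρ :=
          CMmul_succ_le (by omega) (CMlam_pos N (t+1))
        omega
    · -- l ≥ t+2 : long bumps are (weakly) falling here
      rw [if_neg (by omega), if_neg (by omega)]
      have hml : CMm l ≤ CMd N := CMm_le_d (by omega)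
      have h16 : 16 * 2^(3*(t+1)+1) ≤ CMm l := by
        unfold CMm
        calc 16 * 2^(3*(t+1)+1) = 2^(3*t+8) := by rw [pow_add]; ring
          _ ≤ 2^(3*l+2) := Nat.pow_le_pow_right (by norm_num) (by omega)
      have halivel : CMs N l ≤ k := by
        unfold CMs
        omega
      have hB1 : CMB N l (k+1) = Nat.choose (CMm l) ((k - CMs N l) + 1) := by
        unfold CMB
        rw [if_pos (by omega), show k + 1 - CMs N l = (k - CMs N l) + 1 by omega]
      have hB0 : CMB N l k = Nat.choose (CMm l) (k - CMs N l) := by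
        unfold CMB; rw [if_pos halivel]
      rw [hB1, hB0]
      have hfall : Nat.choose (CMm l) ((k - CMs N l) + 1) ≤ Nat.choose (CMm l) (k - CMs N l) := by
        apply chooseB2a
        unfold CMs at halivel ⊢
        omega
      have := Nat.mul_le_mul_left (k := CMlam N l) hfall
      omega
  have hsum := Finset.sum_le_sum hC2
  rw [Finset.sum_add_distrib, Finset.sum_add_distrib] at hsum
  have hsum1 : ∑ l ∈ Finset.Icc 1 N, (if l = t+1 then 1 + X else 0) = 1 + X := by
    rw [Finset.sum_ite_eq' (Finset.Icc 1 N) (t+1) (fun _ => 1 + X)]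
    rw [if_pos (by simp only [Finset.mem_Icc]; omega)]
  have hsum2 : ∑ l ∈ Finset.Icc 1 N, (if l = t then X else 0) ≤ X := by
    rw [Finset.sum_ite_eq' (Finset.Icc 1 N) t (fun _ => X)]
    split <;> omega
  -- base is weakly falling
  have hbase : Nat.choose (CMd N + 1) (k+1) ≤ Nat.choose (CMd N + 1) k := by
    apply chooseB2a
    have h1 : 2^(3*(t+1)+1) ≤ 2^(3*N+1) := Nat.pow_le_pow_right (by norm_num) (by omega)
    have h2 : CMd N = 2 * 2^(3*N+1) := by
      unfold CMd
      rw [show 3*N+2 = (3*N+1)+1 by omega, pow_succ]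
      ring
    omega
  show Nat.choose (CMd N+1) (k+1) + ∑ l ∈ Finset.Icc 1 N, CMlam N l * CMB N l (k+1)
      < Nat.choose (CMd N+1) k + ∑ l ∈ Finset.Icc 1 N, CMlam N l * CMB N l k
  omega

lemma CMh_zero (N : ℕ) : CMh N 0 = 1 := by
  unfold CMh
  have h0 : ∀ t ∈ Finset.Icc 1 N, (if CMs N t ≤ 0 then CMlam N t else 0) = 0 := by
    intro t ht
    simp only [Finset.mem_Icc] at ht
    rw [if_neg]
    have hmd : CMm t ≤ CMd N := CMm_le_d ht.2
    unfold CMs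
    omega
  rw [Finset.sum_congr rfl h0]
  simp

lemma CMG_zero (N : ℕ) : CMG N 0 = 1 := by
  unfold CMG
  have h0 : ∀ t ∈ Finset.Icc 1 N, CMlam N t * CMB N t 0 = 0 := by
    intro t ht
    simp only [Finset.mem_Icc] at ht
    have hmd : CMm t ≤ CMd N := CMm_le_d ht.2
    have hB : CMB N t 0 = 0 := by
      unfold CMB
      rw [if_neg (by unfold CMs; omega)]
    rw [hB, Nat.mul_zero]
  rw [Finset.sum_congr rfl h0]
  simp

lemma CMG_zero_lt_one (N : ℕ) : CMG N 0 < CMG N 1 := by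
  rw [CMG_zero]
  have h1 : Nat.choose (CMd N + 1) 1 ≤ CMG N 1 := by
    unfold CMG
    exact Nat.le_add_right _ _
  rw [Nat.choose_one_right] at h1
  have : 1 ≤ CMd N := Nat.one_le_two_pow
  omega

lemma CMcube {x d0 : ℕ} (hx1 : 1 ≤ x) (hx2 : d0 < x) : x*(1+4*x) + d0 < 8*(x*x*x) := by
  have h1 : 1*x ≤ x*x := Nat.mul_le_mul_right x hx1
  have h2 : 1*(x*x) ≤ x*(x*x) := Nat.mul_le_mul_right (x*x) hx1
  nlinarith

lemma CMh_O {N : ℕ} (hN : 2 ≤ N) : ∀ i, 1 ≤ i → i ≤ CMd N - 1 →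
    CMh N (i+1) ≤ macaulayBound i (CMh N i) := by
  intro i hi1 hi2
  have hd1 : 1 ≤ CMd N := Nat.one_le_two_pow
  by_cases hjump : ∃ t, 1 ≤ t ∧ t ≤ N - 1 ∧ CMs N t = i + 1
  · obtain ⟨t, ht1, ht2, hts⟩ := hjump
    have htN : t < N := by omega
    have hmtd : CMm t ≤ CMd N := CMm_le_d (by omega)
    have hmt1d : CMm (t+1) ≤ CMd N := CMm_le_d (by omega)
    -- value before jump
    have hvi : CMh N i = 1 + ∑ l ∈ Finset.Icc (t+1) N, CMlam N l := by
      unfold CMh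
      congr 1
      rw [← Finset.sum_filter]
      apply Finset.sum_congr
      · ext l
        simp only [Finset.mem_filter, Finset.mem_Icc]
        constructor
        · rintro ⟨⟨hl1, hl2⟩, hcond⟩
          refine ⟨?_, hl2⟩
          by_contra hlt
          have hle : CMm l ≤ CMm t := CMm_mono' (by omega)
          unfold CMs at hcond hts
          omega
        · rintro ⟨hl1, hl2⟩
          have h2m : 2 * CMm t ≤ CMm l := CMm_mono (by omega)
          have hmld : CMm l ≤ CMd N := CMm_le_d (by omega)
          refine ⟨⟨by omega, hl2⟩, ?_⟩
          unfold CMs at hts ⊢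
          omega
      · intro x _; rfl
    have hvi1 : CMh N (i+1) = 1 + (CMlam N t + ∑ l ∈ Finset.Icc (t+1) N, CMlam N l) := by
      unfold CMh
      congr 1
      rw [← Finset.sum_filter]
      have hfil : Finset.filter (fun l => CMs N l ≤ i+1) (Finset.Icc 1 N) = Finset.Icc t N := by
        ext l
        simp only [Finset.mem_filter, Finset.mem_Icc]
        constructor
        · rintro ⟨⟨hl1, hl2⟩, hcond⟩
          refine ⟨?_, hl2⟩
          by_contra hlt
          have hle : 2 * CMm l ≤ CMm t := CMm_mono (by omega)
          unfold CMs at hcond hts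
          omega
        · rintro ⟨hl1, hl2⟩
          have hle : CMm t ≤ CMm l := CMm_mono' (by omega)
          have hmld : CMm l ≤ CMd N := CMm_le_d (by omega)
          refine ⟨⟨by omega, hl2⟩, ?_⟩
          unfold CMs at hts ⊢
          omega
      rw [hfil, show Finset.Icc t N = insert t (Finset.Icc (t+1) N) by
        ext x; simp only [Finset.mem_Icc, Finset.mem_insert]; omega,
        Finset.sum_insert (by simp)]
    rw [hvi, hvi1]
    set v := 1 + ∑ l ∈ Finset.Icc (t+1) N, CMlam N l with hv
    rw [show 1 + (CMlam N t + ∑ l ∈ Finset.Icc (t+1) N, CMlam N l) = v + CMlam N t by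
      rw [hv]; ring]
    have hvS : CMS N ≤ v := by
      have hmem : N ∈ Finset.Icc (t+1) N := by simp only [Finset.mem_Icc]; omega
      have h2 : CMlam N N ≤ ∑ l ∈ Finset.Icc (t+1) N, CMlam N l :=
        Finset.single_le_sum (fun l _ => Nat.zero_le _) hmem
      have h3 := CMS_le_lam N N
      omega
    have hlam1v : CMlam N (t+1) ≤ v := by
      have hmem : t+1 ∈ Finset.Icc (t+1) N := by simp only [Finset.mem_Icc]; omega
      have h2 : CMlam N (t+1) ≤ ∑ l ∈ Finset.Icc (t+1) N, CMlam N l :=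
        Finset.single_le_sum (fun l _ => Nat.zero_le _) hmem
      omega
    have hw : CMlam N t ≤ 4 * 2^(CMd N) * v := by
      rw [CMlam_rec htN]
      have hc : Nat.choose (CMm (t+1)) (CMm t) ≤ 2^(CMd N) :=
        le_trans (chooseB4 _ _) (Nat.pow_le_pow_right (by norm_num) hmt1d)
      exact Nat.mul_le_mul (Nat.mul_le_mul_left 4 hc) hlam1v
    apply CMmB_jump hi1 (by omega)
    intro A hA1 hA2
    have hx : CMd N < 2^(CMd N) := Nat.lt_two_pow_self
    -- A is large
    have hAZ : 2^(3*CMd N+3) < A + 1 := by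
      by_contra hno
      push_neg at hno
      have h1 : v < (A+1)^i := lt_of_lt_of_le hA2 (Nat.choose_le_pow _ _)
      have h2 : (A+1)^i ≤ (2^(3*CMd N+3))^i := Nat.pow_le_pow_left hno i
      have h3 : (2^(3*CMd N+3))^i = 2^((3*CMd N+3)*i) := by rw [← pow_mul]
      have h4 : 2^((3*CMd N+3)*i) ≤ 2^((3*CMd N+3)*CMd N) :=
        Nat.pow_le_pow_right (by norm_num) (Nat.mul_le_mul_left _ (by omega))
      have h5 : 2^((3*CMd N+3)*CMd N) < 2^(3*(CMd N+1)*(CMd N+1)) := by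
        apply Nat.pow_lt_pow_right (by norm_num)
        nlinarith
      have h6 : CMS N = 2^(3*(CMd N+1)*(CMd N+1)) := rfl
      omega
    -- the product chain
    have hid : i + 1 ≤ 2^(CMd N) := by omega
    have hvw : v + CMlam N t ≤ (1 + 4*2^(CMd N)) * v := by
      rw [add_mul, one_mul]
      omega
    have hq : 2^(CMd N)*(1+4*2^(CMd N)) + CMd N < 2^(3*CMd N+3) := by
      have e1 : 2^(3*CMd N+3) = 8 * (2^(CMd N) * 2^(CMd N) * 2^(CMd N)) := by
        rw [show 3*CMd N+3 = CMd N+(CMd N+(CMd N+3)) by ring]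
        rw [pow_add, pow_add, pow_add]
        ring
      rw [e1]
      exact CMcube Nat.one_le_two_pow hx
    have hfac : 2^(CMd N)*(1+4*2^(CMd N)) ≤ A + 1 - i := by omega
    calc (i+1) * (v + CMlam N t)
        ≤ 2^(CMd N) * ((1 + 4*2^(CMd N)) * v) := Nat.mul_le_mul hid hvw
      _ = (2^(CMd N)*(1+4*2^(CMd N))) * v := by ring
      _ ≤ (A + 1 - i) * v := Nat.mul_le_mul_right v hfac
      _ = v * (A + 1 - i) := Nat.mul_comm _ _
      _ ≤ (v+1) * (A + 1 - i) := Nat.mul_le_mul_right _ (by omega)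
  · -- no jump : h constant here
    have heq : CMh N (i+1) = CMh N i := by
      unfold CMh
      congr 1
      apply Finset.sum_congr rfl
      intro t ht
      simp only [Finset.mem_Icc] at ht
      by_cases hc : CMs N t ≤ i
      · rw [if_pos hc, if_pos (by omega)]
      · rw [if_neg hc, if_neg (by
          intro hc2
          have hts : CMs N t = i + 1 := by omega
          rcases Nat.eq_or_lt_of_le ht.2 with heq2 | hlt
          · have hNN : CMs N N = 1 := by
              show CMd N + 1 - CMm N = 1
              have hmm : CMm N = CMd N := rfl
              omega
            rw [heq2] at hts
            omega
          · exact hjump ⟨t, ht.1, by omega, hts⟩)]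
    rw [heq]
    exact CMmB_ge i hi1 (CMh N i)

lemma CMpeak_at {N t : ℕ} (hN : 2 ≤ N) (ht1 : 1 ≤ t) (ht2 : t ≤ N) :
    IsPeak (CMd N + 1) (CMG N) (CMpk N t) := by
  obtain ⟨t', rfl⟩ : ∃ t', t = t'+1 := ⟨t-1, by omega⟩
  have hpk : CMpk N (t'+1) = CMd N + 1 - 2^(3*(t'+1)+1) := rfl
  have hmm : CMm (t'+1) = 2 * 2^(3*(t'+1)+1) := CMm_two (t'+1)
  have hmd : CMm (t'+1) ≤ CMd N := CMm_le_d ht2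
  have ha16 : 16 ≤ 2^(3*(t'+1)+1) :=
    le_trans (by norm_num) (Nat.pow_le_pow_right (by norm_num) (by omega : 4 ≤ 3*(t'+1)+1))
  have hss : CMs N (t'+1) = CMd N + 1 - CMm (t'+1) := rfl
  refine ⟨by omega, Or.inr ?_, Or.inr ?_⟩
  · have hup := CMup (N := N) (t := t'+1) ht1 ht2
      (k := CMpk N (t'+1) - 1) (by omega) (by omega)
    rw [show CMpk N (t'+1) - 1 + 1 = CMpk N (t'+1) by omega] at hup
    exact hup
  · apply CMdown (N := N) (t := t') ht2 (le_refl _) (by omega)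
    intro ht'
    have hss' : CMs N t' = CMd N + 1 - CMm t' := rfl
    have hmm' : 4 * CMm t' = 2^(3*(t'+1)+1) := by
      unfold CMm
      rw [show 3*(t'+1)+1 = (3*t'+2)+2 by omega, pow_add]
      ring
    have hmd' : CMm t' ≤ CMd N := CMm_le_d (by omega)
    omega

lemma CMpeak_only {N j : ℕ} (hN : 2 ≤ N) (hpk : IsPeak (CMd N+1) (CMG N) j) :
    ∃ t, 1 ≤ t ∧ t ≤ N ∧ j = CMpk N t := by
  obtain ⟨hjL, h2, h3⟩ := hpk
  by_contra hno
  push_neg at hno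
  have hd4 : 4 ≤ CMd N := by
    have : CMm N = CMd N := rfl
    have := CMm_ge N
    omega
  rcases Nat.eq_zero_or_pos j with rfl | hj1
  · rcases h3 with h3 | h3
    · omega
    · have h3' : CMG N 1 < CMG N 0 := h3
      have := CMG_zero_lt_one N
      omega
  · have hex : ∃ m, CMs N (m+1) ≤ j := by
      refine ⟨N-1, ?_⟩
      rw [show N-1+1 = N by omega]
      show CMd N + 1 - CMm N ≤ j
      have : CMm N = CMd N := rfl
      omega
    have hfind : CMs N (Nat.find hex + 1) ≤ j := Nat.find_spec hex
    have hm0N : Nat.find hex ≤ N - 1 := Nat.find_le (by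
      rw [show N-1+1 = N by omega]
      show CMd N + 1 - CMm N ≤ j
      have : CMm N = CMd N := rfl
      omega)
    set m0 := Nat.find hex with hm0def
    have ht0N : m0 + 1 ≤ N := by omega
    have hpkt0 : CMpk N (m0+1) = CMd N + 1 - 2^(3*(m0+1)+1) := rfl
    have hmm0 : CMm (m0+1) = 2 * 2^(3*(m0+1)+1) := CMm_two (m0+1)
    have hmd0 : CMm (m0+1) ≤ CMd N := CMm_le_d ht0N
    have hss0 : CMs N (m0+1) = CMd N + 1 - CMm (m0+1) := rfl
    rcases lt_trichotomy j (CMpk N (m0+1)) with hcase | hcase | hcase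
    · -- rising region : not a peak on the right
      have hup := CMup (N := N) (t := m0+1) (by omega) ht0N (k := j) hfind (by omega)
      rcases h3 with h3 | h3
      · omega
      · omega
    · exact hno (m0+1) (by omega) ht0N hcase
    · -- falling region : not a peak on the left
      have hdown := CMdown (N := N) (t := m0) ht0N (k := j - 1)
        (by omega) (by omega)
        (by
          intro hm01
          have hmin := Nat.find_min hex (m := m0 - 1) (by omega)
          rw [show m0 - 1 + 1 = m0 by omega] at hmin
          omega)
      rw [show j - 1 + 1 = j by omega] at hdown
      rcases h2 with h2 | h2
      · omega
      · omega

lemma CMisPeak_iff {N j : ℕ} {g : ℕ → ℕ} (hg : ∀ k, k ≤ CMd N → g k = CMG N k) :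
    IsPeak (CMd N + 1) g j ↔ IsPeak (CMd N + 1) (CMG N) j := by
  unfold IsPeak
  constructor
  · rintro ⟨h1, h2, h3⟩
    refine ⟨h1, ?_, ?_⟩
    · rcases h2 with h2 | h2
      · exact Or.inl h2
      · exact Or.inr (by rw [← hg (j-1) (by omega), ← hg j (by omega)]; exact h2)
    · rcases h3 with h3 | h3
      · exact Or.inl h3
      · by_cases hj : j + 1 = CMd N + 1
        · exact Or.inl hj
        · exact Or.inr (by rw [← hg (j+1) (by omega), ← hg j (by omega)]; exact h3)
  · rintro ⟨h1, h2, h3⟩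
    refine ⟨h1, ?_, ?_⟩
    · rcases h2 with h2 | h2
      · exact Or.inl h2
      · exact Or.inr (by rw [hg (j-1) (by omega), hg j (by omega)]; exact h2)
    · rcases h3 with h3 | h3
      · exact Or.inl h3
      · by_cases hj : j + 1 = CMd N + 1
        · exact Or.inl hj
        · exact Or.inr (by rw [hg (j+1) (by omega), hg j (by omega)]; exact h3)


/-- For every integer `N ≥ 2` there exist an `e ≥ 1` and an O-sequence
`(h 0 = 1, h 1, …, h (e+1))` such that the sequence `(f₋₁ = 1, f₀, …, f_e)` defined by
`f_{k-1} = ∑_{i=0}^{k} C(e+1-i, k-i) * h i` is nonunimodal with exactly `N` peaks. -/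
theorem cm_fvector_arbitrarily_many_peaks (N : ℕ) (hN : 2 ≤ N) :
    ∃ (e : ℕ) (h : ℕ → ℕ), 1 ≤ e ∧ h 0 = 1 ∧
      (∀ i, 1 ≤ i → i ≤ e → h (i + 1) ≤ macaulayBound i (h i)) ∧
      {j | IsPeak (e + 2)
        (fun k => ∑ i ∈ Finset.range (k + 1), Nat.choose (e + 1 - i) (k - i) * h i) j}.ncard
        = N := by
  have hd4 : 4 ≤ CMd N := by
    have h1 : CMm N = CMd N := rfl
    have := CMm_ge N
    omega
  refine ⟨CMd N - 1, CMh N, by omega, CMh_zero N, ?_, ?_⟩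
  · intro i h1 h2
    exact CMh_O hN i h1 h2
  · have he1 : CMd N - 1 + 1 = CMd N := by omega
    have he2 : CMd N - 1 + 2 = CMd N + 1 := by omega
    rw [he1, he2]
    have hg : ∀ k, k ≤ CMd N →
        (∑ i ∈ Finset.range (k + 1), Nat.choose (CMd N - i) (k - i) * CMh N i) = CMG N k :=
      fun k hk => CMtransform hk
    have hsetEq : {j | IsPeak (CMd N + 1)
        (fun k => ∑ i ∈ Finset.range (k + 1), Nat.choose (CMd N - i) (k - i) * CMh N i) j}
        = ↑((Finset.Icc 1 N).image (CMpk N)) := by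
      ext j
      simp only [Set.mem_setOf_eq, Finset.coe_image, Set.mem_image, Finset.mem_coe,
        Finset.mem_Icc]
      constructor
      · intro hpk
        rw [CMisPeak_iff hg] at hpk
        obtain ⟨t, ht1, ht2, hteq⟩ := CMpeak_only hN hpk
        exact ⟨t, ⟨ht1, ht2⟩, hteq.symm⟩
      · rintro ⟨t, ⟨ht1, ht2⟩, hteq⟩
        rw [CMisPeak_iff hg, ← hteq]
        exact CMpeak_at hN ht1 ht2
    rw [hsetEq, Set.ncard_coe_finset]
    rw [Finset.card_image_of_injOn, Nat.card_Icc]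
    · omega
    · intro t1 h1 t2 h2 heq
      simp only [Finset.coe_Icc, Set.mem_Icc] at h1 h2
      have hb1 : 2^(3*t1+1) ≤ CMd N := by
        unfold CMd
        exact Nat.pow_le_pow_right (by norm_num) (by omega)
      have hb2 : 2^(3*t2+1) ≤ CMd N := by
        unfold CMd
        exact Nat.pow_le_pow_right (by norm_num) (by omega)
      have hpow : 2^(3*t1+1) = 2^(3*t2+1) := by
        unfold CMpk at heq
        omega
      have := Nat.pow_right_injective (le_refl 2) hpow
      omega
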